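/- Let r : R → ℤ be a non-archimedean function on a root system R, define r_m(α) = max{r(β) : β not strongly orthogonal to α} and k₀(α) = (r_m(α) − r(α))/2 (a half-integer). Then k₀ satisfies: (1) k₀(α) + k₀(−α) ≥ r_m(α) − r(α) for all α ∈ R (with equality); and (2) k₀(α) + k₀(β) − k₀(α+β) ≥ r(α+β) − min{r(α), r(β)} whenever α, β, α+β ∈ R. -/

import Mathlib

variable {V : Type*} [NormedAddCommGroup V] [InnerProductSpace ℝ V] [DecidableEq V]

/-- A (crystallographic) root system, encoded as a finite subset of a real inner
product space: it does not contain `0`, is symmetric, is stable under the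
reflections in its elements, and satisfies the integrality condition. -/
def IsCrystRootSet (R : Finset V) : Prop :=
  (0 : V) ∉ R ∧ (∀ α ∈ R, -α ∈ R) ∧
  (∀ α ∈ R, ∀ β ∈ R, β - (2 * (inner ℝ β α : ℝ) / (inner ℝ α α : ℝ)) • α ∈ R) ∧
  (∀ α ∈ R, ∀ β ∈ R, ∃ z : ℤ, 2 * (inner ℝ β α : ℝ) = z * (inner ℝ α α : ℝ))

/-- Two roots are strongly orthogonal if neither their sum nor their difference
lies in `R ∪ {0}`. -/
def StronglyOrthogonal (R : Finset V) (α β : V) : Prop :=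
  α + β ∉ R ∧ α - β ∉ R ∧ α + β ≠ 0 ∧ α - β ≠ 0

instance (R : Finset V) (α β : V) : Decidable (StronglyOrthogonal R α β) :=
  inferInstanceAs (Decidable (α + β ∉ R ∧ α - β ∉ R ∧ α + β ≠ 0 ∧ α - β ≠ 0))

/-- `perp R S` is the set of roots strongly orthogonal to every root of `S`. -/
def perp (R : Finset V) (S : Finset V) : Finset V :=
  R.filter fun β => ∀ α ∈ S, StronglyOrthogonal R α β

/-- A function `r : R → ℤ` on a root system is non-archimedean if it is even and
satisfies the ultrametric inequality. -/
def NonArch (R : Finset V) (r : V → ℤ) : Prop :=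
  (∀ α ∈ R, r (-α) = r α) ∧
  ∀ α ∈ R, ∀ β ∈ R, α + β ∈ R → min (r α) (r β) ≤ r (α + β)

/-- `rm R r α` is the maximum of `r β` over the roots `β` not strongly
orthogonal to `α` (for `α ∈ R` this set contains `α` itself, so is nonempty). -/
def rm (R : Finset V) (r : V → ℤ) (α : V) : ℤ :=
  WithBot.unbotD (r α)
    (((R.filter fun β => ¬ StronglyOrthogonal R α β).image r).max)

section Aux

variable {R : Finset V} {r : V → ℤ} {α β γ δ : V}

lemma inner_self_pos' {x : V} (hx : x ≠ 0) : (0:ℝ) < inner ℝ x x :=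
  lt_of_le_of_ne real_inner_self_nonneg
    (Ne.symm fun h => hx (inner_self_eq_zero.1 h))

/-- If two roots have positive inner product, their difference is a root or zero. -/
lemma sub_mem_of_inner_pos (hR : IsCrystRootSet R) (hα : α ∈ R) (hβ : β ∈ R)
    (h : 0 < (inner ℝ α β : ℝ)) : α - β ∈ R ∨ α - β = 0 := by
  obtain ⟨h0, hneg, hrefl, hint⟩ := hR
  have hα0 : α ≠ 0 := fun h => h0 (h ▸ hα)
  have hβ0 : β ≠ 0 := fun h => h0 (h ▸ hβ)
  have hαα : (0:ℝ) < inner ℝ α α := inner_self_pos' hα0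
  have hββ : (0:ℝ) < inner ℝ β β := inner_self_pos' hβ0
  obtain ⟨m, hm⟩ := hint α hα β hβ
  obtain ⟨n, hn⟩ := hint β hβ α hα
  have hsymm : (inner ℝ β α : ℝ) = inner ℝ α β := real_inner_comm α β
  have hm1 : 1 ≤ m := by
    have hp : (0:ℝ) < m * inner ℝ α α := by rw [← hm, hsymm]; linarith
    have h0 : (0:ℝ) < (m:ℝ) := by nlinarith
    have : (0:ℤ) < m := by exact_mod_cast h0
    omega
  have hn1 : 1 ≤ n := by
    have h0 : (0:ℝ) < (n:ℝ) := by nlinarith [hn]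
    have : (0:ℤ) < n := by exact_mod_cast h0
    omega
  have hcs := real_inner_mul_inner_self_le α β
  have hmn : m * n ≤ 4 := by
    have h4 : (m:ℝ) * n * (inner ℝ α α * inner ℝ β β) ≤ 4 * (inner ℝ α α * inner ℝ β β) := by
      nlinarith [hm, hn, hcs, hsymm]
    have : ((m * n : ℤ) : ℝ) ≤ 4 := by
      push_cast
      nlinarith [mul_pos hαα hββ]
    exact_mod_cast this
  rcases eq_or_lt_of_le hn1 with hn2 | hn2
  · -- n = 1 : reflect α in β
    have := hrefl β hβ α hα
    have hcoef : 2 * (inner ℝ α β : ℝ) / inner ℝ β β = 1 := by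
      rw [hn, ← hn2]; push_cast; field_simp
    rw [hcoef, one_smul] at this
    exact Or.inl this
  rcases eq_or_lt_of_le hm1 with hm2 | hm2
  · -- m = 1 : reflect β in α
    have := hrefl α hα β hβ
    have hcoef : 2 * (inner ℝ β α : ℝ) / inner ℝ α α = 1 := by
      rw [hm, ← hm2]; push_cast; field_simp
    rw [hcoef, one_smul] at this
    have : -(β - α) ∈ R := hneg _ this
    rw [neg_sub] at this
    exact Or.inl this
  · -- m, n ≥ 2 : then m = n = 2 and α = β
    have hm2' : 2 ≤ m := hm2
    have hn2' : 2 ≤ n := hn2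
    have hm22 : m = 2 ∧ n = 2 := by
      constructor <;> nlinarith
    have hba : (inner ℝ β α : ℝ) = inner ℝ α α := by
      have := hm; rw [hm22.1] at this; push_cast at this; linarith
    have hab : (inner ℝ α β : ℝ) = inner ℝ β β := by
      have := hn; rw [hm22.2] at this
      have hsymm' : (inner ℝ α β : ℝ) = inner ℝ β α := real_inner_comm β α
      push_cast at this; linarith
    have hz : (inner ℝ (α - β) (α - β) : ℝ) = 0 := by
      rw [inner_sub_sub_self]
      linarith
    exact Or.inr (inner_self_eq_zero.1 hz)

/-- Strongly orthogonal roots are orthogonal. -/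
lemma inner_eq_zero_of_so (hR : IsCrystRootSet R) (hα : α ∈ R) (hβ : β ∈ R)
    (h : StronglyOrthogonal R α β) : (inner ℝ α β : ℝ) = 0 := by
  by_contra hne
  rcases lt_or_gt_of_ne hne with hlt | hgt
  · have hnegβ : -β ∈ R := hR.2.1 β hβ
    have hpos : 0 < (inner ℝ α (-β) : ℝ) := by
      rw [inner_neg_right]; linarith
    rcases sub_mem_of_inner_pos hR hα hnegβ hpos with hmem | heq
    · rw [sub_neg_eq_add] at hmem; exact h.1 hmem
    · rw [sub_neg_eq_add] at heq; exact h.2.2.1 heq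
  · rcases sub_mem_of_inner_pos hR hα hβ hgt with hmem | heq
    · exact h.2.1 hmem
    · exact h.2.2.2 heq

/-- Key lemma: a root not strongly orthogonal to `α + β` fails to be strongly
orthogonal to `α` or to `β`. -/
lemma not_so_of_sum (hR : IsCrystRootSet R) (hα : α ∈ R) (hβ : β ∈ R)
    (hγ : α + β ∈ R) (hδ : δ ∈ R) (h : ¬ StronglyOrthogonal R (α + β) δ) :
    ¬ StronglyOrthogonal R α δ ∨ ¬ StronglyOrthogonal R β δ := by
  by_contra hcon
  push_neg at hcon
  obtain ⟨hsoα', hsoβ'⟩ := hcon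
  have hδ0 : δ ≠ 0 := fun h0 => hR.1 (h0 ▸ hδ)
  have hγ0 : α + β ≠ 0 := fun h0 => hR.1 (h0 ▸ hγ)
  have hiα : (inner ℝ α δ : ℝ) = 0 := inner_eq_zero_of_so hR hα hδ hsoα'
  have hiβ : (inner ℝ β δ : ℝ) = 0 := inner_eq_zero_of_so hR hβ hδ hsoβ'
  have hiγ : (inner ℝ (α + β) δ : ℝ) = 0 := by rw [inner_add_left, hiα, hiβ, add_zero]
  have hδδ : (0:ℝ) < inner ℝ δ δ := inner_self_pos' hδ0
  have hγγ : (0:ℝ) < inner ℝ (α + β) (α + β) := inner_self_pos' hγ0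
  have hsum0 : α + β + δ ≠ 0 := by
    intro h0
    have : (inner ℝ (α + β) (α + β + δ) : ℝ) = 0 := by rw [h0, inner_zero_right]
    rw [inner_add_right, hiγ, add_zero] at this
    linarith
  have hdiff0 : α + β - δ ≠ 0 := by
    intro h0
    have : (inner ℝ (α + β) (α + β - δ) : ℝ) = 0 := by rw [h0, inner_zero_right]
    rw [inner_sub_right, hiγ, sub_zero] at this
    linarith
  have hmem : α + β + δ ∈ R ∨ α + β - δ ∈ R := by
    by_contra hc
    push_neg at hc
    exact h ⟨hc.1, hc.2, hsum0, hdiff0⟩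
  rcases hmem with hε | hε
  · -- ε = γ + δ ∈ R
    have hsum : (inner ℝ α (α + β + δ) : ℝ) + inner ℝ β (α + β + δ) = inner ℝ (α+β) (α+β) := by
      have e1 : (inner ℝ α (α + β + δ) : ℝ) = inner ℝ α (α+β) + inner ℝ α δ := by
        rw [← inner_add_right]
      have e2 : (inner ℝ β (α + β + δ) : ℝ) = inner ℝ β (α+β) + inner ℝ β δ := by
        rw [← inner_add_right]
      rw [e1, e2, hiα, hiβ, inner_add_left]
      ring
    have hpos : 0 < (inner ℝ α (α + β + δ) : ℝ) ∨ 0 < (inner ℝ β (α + β + δ) : ℝ) := by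
      by_contra hc; push_neg at hc; linarith [hc.1, hc.2]
    rcases hpos with hp | hp
    · rcases sub_mem_of_inner_pos hR hα hε hp with hmem' | heq'
      · have : α - (α + β + δ) = -(β + δ) := by abel
        rw [this] at hmem'
        have : β + δ ∈ R := by have := hR.2.1 _ hmem'; rwa [neg_neg] at this
        exact hsoβ'.1 this
      · have : α - (α + β + δ) = -(β + δ) := by abel
        rw [this, neg_eq_zero] at heq'
        exact hsoβ'.2.2.1 heq'
    · rcases sub_mem_of_inner_pos hR hβ hε hp with hmem' | heq'
      · have : β - (α + β + δ) = -(α + δ) := by abel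
        rw [this] at hmem'
        have : α + δ ∈ R := by have := hR.2.1 _ hmem'; rwa [neg_neg] at this
        exact hsoα'.1 this
      · have : β - (α + β + δ) = -(α + δ) := by abel
        rw [this, neg_eq_zero] at heq'
        exact hsoα'.2.2.1 heq'
  · -- ε = γ - δ ∈ R
    have hsum : (inner ℝ α (α + β - δ) : ℝ) + inner ℝ β (α + β - δ) = inner ℝ (α+β) (α+β) := by
      have e1 : (inner ℝ α (α + β - δ) : ℝ) = inner ℝ α (α+β) - inner ℝ α δ := by
        rw [← inner_sub_right]
      have e2 : (inner ℝ β (α + β - δ) : ℝ) = inner ℝ β (α+β) - inner ℝ β δ := by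
        rw [← inner_sub_right]
      rw [e1, e2, hiα, hiβ, inner_add_left]
      ring
    have hpos : 0 < (inner ℝ α (α + β - δ) : ℝ) ∨ 0 < (inner ℝ β (α + β - δ) : ℝ) := by
      by_contra hc; push_neg at hc; linarith [hc.1, hc.2]
    rcases hpos with hp | hp
    · rcases sub_mem_of_inner_pos hR hα hε hp with hmem' | heq'
      · have : α - (α + β - δ) = δ - β := by abel
        rw [this] at hmem'
        have : β - δ ∈ R := by
          have := hR.2.1 _ hmem'; rwa [neg_sub] at this
        exact hsoβ'.2.1 this
      · have : α - (α + β - δ) = δ - β := by abel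
        rw [this, sub_eq_zero] at heq'
        exact hsoβ'.2.2.2 (by rw [heq', sub_self])
    · rcases sub_mem_of_inner_pos hR hβ hε hp with hmem' | heq'
      · have : β - (α + β - δ) = δ - α := by abel
        rw [this] at hmem'
        have : α - δ ∈ R := by
          have := hR.2.1 _ hmem'; rwa [neg_sub] at this
        exact hsoα'.2.1 this
      · have : β - (α + β - δ) = δ - α := by abel
        rw [this, sub_eq_zero] at heq'
        exact hsoα'.2.2.2 (by rw [heq', sub_self])

lemma le_rm (hβ : β ∈ R) (h : ¬ StronglyOrthogonal R α β) : r β ≤ rm R r α := by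
  classical
  set t := (R.filter fun β => ¬ StronglyOrthogonal R α β).image r with ht
  have hmem : r β ∈ t := Finset.mem_image_of_mem r (Finset.mem_filter.2 ⟨hβ, h⟩)
  have hne : t.Nonempty := ⟨r β, hmem⟩
  obtain ⟨m, hm⟩ := Finset.max_of_nonempty hne
  have := Finset.le_max hmem
  rw [hm] at this
  rw [rm, ← ht, hm, WithBot.unbotD_coe]
  exact_mod_cast this

lemma rm_spec (hα : α ∈ R) :
    ∃ δ ∈ R, ¬ StronglyOrthogonal R α δ ∧ rm R r α = r δ := by
  classical
  have hself : ¬ StronglyOrthogonal R α α := fun h => h.2.2.2 (sub_self α)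
  set s := R.filter fun β => ¬ StronglyOrthogonal R α β with hs
  have hne : s.Nonempty := ⟨α, Finset.mem_filter.2 ⟨hα, hself⟩⟩
  have hne' : (s.image r).Nonempty := hne.image r
  obtain ⟨m, hm⟩ := Finset.max_of_nonempty hne'
  have hmm : m ∈ s.image r := Finset.mem_of_max hm
  obtain ⟨δ, hδs, hδr⟩ := Finset.mem_image.1 hmm
  have hδ := Finset.mem_filter.1 hδs
  refine ⟨δ, hδ.1, hδ.2, ?_⟩
  rw [rm, ← hs, hm, WithBot.unbotD_coe, hδr]

lemma so_neg_left (hR : IsCrystRootSet R) :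
    StronglyOrthogonal R (-α) β ↔ StronglyOrthogonal R α β := by
  have key : ∀ x : V, -x ∈ R ↔ x ∈ R := fun x =>
    ⟨fun h => by have := hR.2.1 _ h; rwa [neg_neg] at this, fun h => hR.2.1 x h⟩
  unfold StronglyOrthogonal
  constructor
  · rintro ⟨h1, h2, h3, h4⟩
    refine ⟨fun h => h2 ?_, fun h => h1 ?_, fun h => h4 ?_, fun h => h3 ?_⟩
    · rw [show -α - β = -(α + β) by abel, key]; exact h
    · rw [show -α + β = -(α - β) by abel, key]; exact h
    · rw [show -α - β = -(α + β) by abel, h, neg_zero]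
    · rw [show -α + β = -(α - β) by abel, h, neg_zero]
  · rintro ⟨h1, h2, h3, h4⟩
    refine ⟨fun h => ?_, fun h => ?_, fun h => ?_, fun h => ?_⟩
    · rw [show -α + β = -(α - β) by abel, key] at h; exact h2 h
    · rw [show -α - β = -(α + β) by abel, key] at h; exact h1 h
    · rw [show -α + β = -(α - β) by abel, neg_eq_zero] at h; exact h4 h
    · rw [show -α - β = -(α + β) by abel, neg_eq_zero] at h; exact h3 h

lemma rm_neg (hR : IsCrystRootSet R) (hα : α ∈ R) : rm R r (-α) = rm R r α := by
  classical
  unfold rm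
  have hset : (R.filter fun β => ¬ StronglyOrthogonal R (-α) β) =
      (R.filter fun β => ¬ StronglyOrthogonal R α β) := by
    apply Finset.filter_congr
    intro x _
    exact not_congr (so_neg_left hR)
  rw [hset]
  have hself : ¬ StronglyOrthogonal R α α := fun h => h.2.2.2 (sub_self α)
  have hne : ((R.filter fun β => ¬ StronglyOrthogonal R α β).image r).Nonempty :=
    (Finset.Nonempty.image ⟨α, Finset.mem_filter.2 ⟨hα, hself⟩⟩ r)
  obtain ⟨m, hm⟩ := Finset.max_of_nonempty hne
  rw [hm, WithBot.unbotD_coe, WithBot.unbotD_coe]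

/-- The three-root inequality. -/
lemma three_root (hR : IsCrystRootSet R) (hna : NonArch R r)
    (hα : α ∈ R) (hβ : β ∈ R) (hγ : α + β ∈ R) (hle : r α ≤ r β) :
    rm R r (α + β) + (r (α + β) + r β - r α) ≤ rm R r α + rm R r β := by
  obtain ⟨δ, hδR, hδso, hδrm⟩ := rm_spec (r := r) hγ
  -- basic non-strong-orthogonality facts
  have hsoαβ : ¬ StronglyOrthogonal R α β := fun h => h.1 hγ
  have hsoαγ : ¬ StronglyOrthogonal R α (α + β) := fun h => by
    have : α - (α + β) = -β := by abel
    exact h.2.1 (by rw [this]; exact hR.2.1 β hβ)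
  have hsoβγ : ¬ StronglyOrthogonal R β (α + β) := fun h => by
    have : β - (α + β) = -α := by abel
    exact h.2.1 (by rw [this]; exact hR.2.1 α hα)
  have hsoββ : ¬ StronglyOrthogonal R β β := fun h => h.2.2.2 (sub_self β)
  have h1 : r β ≤ rm R r α := le_rm hβ hsoαβ
  have h2 : r (α + β) ≤ rm R r α := le_rm hγ hsoαγ
  have h4 : r (α + β) ≤ rm R r β := le_rm hγ hsoβγ
  have h5 : r β ≤ rm R r β := le_rm hβ hsoββ
  -- ultrametric facts
  have hu1 : min (r α) (r β) ≤ r (α + β) := hna.2 α hα β hβ hγ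
  have hu2 : min (r (α + β)) (r β) ≤ r α := by
    have hnegβ : -β ∈ R := hR.2.1 β hβ
    have hsum : α + β + -β = α := by abel
    have := hna.2 (α + β) hγ (-β) hnegβ (by rw [hsum]; exact hα)
    rw [hsum, hna.1 β hβ] at this
    exact this
  -- the maximizing root pairs with α or β
  have hδle : r δ ≤ rm R r α ∨ r δ ≤ rm R r β := by
    rcases not_so_of_sum hR hα hβ hγ hδR hδso with h | h
    · exact Or.inl (le_rm hδR h)
    · exact Or.inr (le_rm hδR h)
  rw [hδrm]
  rcases hδle with h | h <;> omega

end Aux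

/-- The half-integral function `k₀(α) = (r_m(α) − r(α))/2` satisfies the two
conditions characterizing root valuation lattices (with equality in the first). -/
theorem k0_conditions (R : Finset V) (hR : IsCrystRootSet R) (r : V → ℤ)
    (hna : NonArch R r) :
    (∀ α ∈ R,
      (((rm R r α : ℚ) - (r α : ℚ)) / 2) + (((rm R r (-α) : ℚ) - (r (-α) : ℚ)) / 2) =
        (rm R r α : ℚ) - (r α : ℚ)) ∧
    (∀ α ∈ R, ∀ β ∈ R, α + β ∈ R →
      ((r (α + β) : ℚ) - (min (r α) (r β) : ℤ) ≤
        (((rm R r α : ℚ) - (r α : ℚ)) / 2) + (((rm R r β : ℚ) - (r β : ℚ)) / 2) -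
          (((rm R r (α + β) : ℚ) - (r (α + β) : ℚ)) / 2))) := by
  constructor
  · intro α hα
    rw [rm_neg hR hα, hna.1 α hα]
    ring
  · intro α hα β hβ hγ
    rcases le_total (r α) (r β) with hle | hle
    · have key := three_root hR hna hα hβ hγ hle
      rw [min_eq_left hle]
      have key' : ((rm R r (α + β) : ℚ)) + ((r (α + β) : ℚ) + (r β : ℚ) - (r α : ℚ)) ≤
          (rm R r α : ℚ) + (rm R r β : ℚ) := by exact_mod_cast key
      linarith
    · have hγ' : β + α ∈ R := by rwa [add_comm]
      have key := three_root hR hna hβ hα hγ' hle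
      rw [add_comm β α] at key
      rw [min_eq_right hle]
      have key' : ((rm R r (α + β) : ℚ)) + ((r (α + β) : ℚ) + (r α : ℚ) - (r β : ℚ)) ≤
          (rm R r β : ℚ) + (rm R r α : ℚ) := by exact_mod_cast key
      linarith
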